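/- (Exact discretization of the strapdown IMU dynamics under zero-order hold.) Fix ω, a, g ∈ ℝ³, a 3×3 real matrix R₀, and v₀, p₀ ∈ ℝ³. Define R(t) := R₀ · Γ₀(t ω), v(t) := v₀ + t g + t · R₀ · Γ₁(t ω) · a, and p(t) := p₀ + t v₀ + (t²/2) g + t² · R₀ · Γ₂(t ω) · a. Then for every t ∈ ℝ these curves are differentiable and satisfy the continuous-time dynamics: d/dt R(t) = R(t) · ω̂, d/dt v(t) = R(t) · a + g, and d/dt p(t) = v(t). Hence the discrete updates R_{k+1} = R_k Γ₀(ω Δt), v_{k+1} = v_k + R_k Γ₁(ω Δt) a Δt + g Δt, p_{k+1} = p_k + v_k Δt + R_k Γ₂(ω Δt) a Δt² + (1/2) g Δt² are an exact integration of the continuous system when the inputs are constant over the time step. -/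

import Mathlib

open Matrix

/-- The skew-symmetric (hat) matrix of a vector `φ ∈ ℝ³`, so that `skew φ *ᵥ x = φ × x`. -/
noncomputable def skew (φ : Fin 3 → ℝ) : Matrix (Fin 3) (Fin 3) ℝ :=
  !![0, -φ 2, φ 1; φ 2, 0, -φ 0; -φ 1, φ 0, 0]

/-- `Γₘ(φ) = Σ_{n=0}^∞ (1/(n+m)!) φ̂ⁿ`. -/
noncomputable def Gamma (m : ℕ) (φ : Fin 3 → ℝ) : Matrix (Fin 3) (Fin 3) ℝ :=
  ∑' n : ℕ, (((n + m).factorial : ℝ))⁻¹ • skew φ ^ n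

section Aux

lemma skew_smul (ω : Fin 3 → ℝ) (s : ℝ) : skew (s • ω) = s • skew ω := by
  ext i j
  fin_cases i <;> fin_cases j <;> simp [skew]

lemma entry_bound (A : Matrix (Fin 3) (Fin 3) ℝ) :
    ∃ C : ℝ, 1 ≤ C ∧ ∀ (n : ℕ) (i j : Fin 3), |(A ^ n) i j| ≤ C ^ n := by
  have hsum0 : (0:ℝ) ≤ ∑ k : Fin 3, ∑ l : Fin 3, |A k l| :=
    Finset.sum_nonneg fun k _ => Finset.sum_nonneg fun l _ => abs_nonneg _
  refine ⟨1 + ∑ k : Fin 3, ∑ l : Fin 3, |A k l|, by linarith, ?_⟩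
  set C := 1 + ∑ k : Fin 3, ∑ l : Fin 3, |A k l| with hCdef
  have hC1 : 1 ≤ C := by rw [hCdef]; linarith
  have hcol : ∀ j : Fin 3, (∑ k : Fin 3, |A k j|) ≤ C := by
    intro j
    have h2 : (∑ k : Fin 3, |A k j|) ≤ ∑ k : Fin 3, ∑ l : Fin 3, |A k l| := by
      refine Finset.sum_le_sum fun k _ => ?_
      exact Finset.single_le_sum (f := fun l => |A k l|) (fun l _ => abs_nonneg _)
        (Finset.mem_univ j)
    rw [hCdef]; linarith
  intro n
  induction n with
  | zero => intro i j; rcases eq_or_ne i j with h | h <;>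
      simp [Matrix.one_apply, h]
  | succ n ih =>
    intro i j
    have : (A ^ (n + 1)) i j = ∑ k : Fin 3, (A ^ n) i k * A k j := by
      rw [pow_succ, Matrix.mul_apply]
    rw [this]
    calc |∑ k : Fin 3, (A ^ n) i k * A k j| ≤ ∑ k : Fin 3, |(A ^ n) i k * A k j| :=
          Finset.abs_sum_le_sum_abs _ _
      _ ≤ ∑ k : Fin 3, C ^ n * |A k j| := by
          refine Finset.sum_le_sum fun k _ => ?_
          rw [abs_mul]
          exact mul_le_mul_of_nonneg_right (ih i k) (abs_nonneg _)
      _ = C ^ n * ∑ k : Fin 3, |A k j| := by rw [Finset.mul_sum]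
      _ ≤ C ^ n * C :=
          mul_le_mul_of_nonneg_left (hcol j) (pow_nonneg (by linarith) n)
      _ = C ^ (n + 1) := (pow_succ C n).symm

lemma master_summable (C r : ℝ) (hC : 1 ≤ C) (hr : 1 ≤ r) (m : ℕ) :
    Summable fun n : ℕ => ((n + m : ℕ) + 1 : ℝ) * r ^ (n + m) * (((n + m).factorial : ℝ))⁻¹ * C ^ n := by
  have h2 : ∀ n : ℕ, ((n + m : ℕ) + 1 : ℝ) ≤ ((m:ℝ) + 2) * 2 ^ n := by
    intro n
    have h1 : (n : ℝ) + 1 ≤ 2 ^ n := by exact_mod_cast Nat.lt_two_pow_self (n := n)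
    have hn : (0:ℝ) ≤ n := Nat.cast_nonneg n
    have hm : (0:ℝ) ≤ m := Nat.cast_nonneg m
    push_cast
    nlinarith
  refine Summable.of_nonneg_of_le (fun n => by positivity) (fun n => ?_)
    ((Real.summable_pow_div_factorial (2 * r * C)).mul_left (((m:ℝ) + 2) * r ^ m))
  have hr0 : (0:ℝ) ≤ r := le_trans zero_le_one hr
  have hfact : (((n + m).factorial : ℝ))⁻¹ ≤ ((n.factorial : ℝ))⁻¹ := by
    apply inv_anti₀
    · exact_mod_cast Nat.factorial_pos n
    · exact_mod_cast Nat.factorial_le (Nat.le_add_right n m)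
  calc ((n + m : ℕ) + 1 : ℝ) * r ^ (n + m) * (((n + m).factorial : ℝ))⁻¹ * C ^ n
      ≤ (((m:ℝ) + 2) * 2 ^ n) * r ^ (n + m) * ((n.factorial : ℝ))⁻¹ * C ^ n := by
        gcongr
        exact h2 n
    _ = ((m:ℝ) + 2) * r ^ m * ((2 * r * C) ^ n / n.factorial) := by
        rw [pow_add, mul_pow, mul_pow]
        field_simp

lemma summable_entry (c : ℕ → ℝ) (C : ℝ) (hC : 1 ≤ C) (hc : ∀ n, |c n| ≤ C ^ n)
    (m : ℕ) (s : ℝ) :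
    Summable fun n : ℕ => s ^ n * ((((n + m).factorial : ℝ))⁻¹ * c n) := by
  set r : ℝ := |s| + 1 with hrdef
  have hr : 1 ≤ r := le_add_of_nonneg_left (abs_nonneg s)
  have hr0 : (0:ℝ) ≤ r := le_trans zero_le_one hr
  refine Summable.of_norm_bounded (master_summable C r hC hr m) fun n => ?_
  rw [Real.norm_eq_abs, abs_mul, abs_mul, abs_pow,
    abs_of_nonneg (inv_nonneg.mpr (Nat.cast_nonneg ((n+m).factorial) : (0:ℝ) ≤ _))]
  have h1 : |s| ^ n ≤ r ^ (n + m) := by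
    calc |s| ^ n ≤ r ^ n := by gcongr; simp [hrdef]
      _ ≤ r ^ (n + m) := pow_le_pow_right₀ hr (Nat.le_add_right n m)
  calc |s| ^ n * ((((n + m).factorial : ℝ))⁻¹ * |c n|)
      ≤ r ^ (n + m) * ((((n + m).factorial : ℝ))⁻¹ * C ^ n) := by
        gcongr
        exact hc n
    _ ≤ ((n + m : ℕ) + 1 : ℝ) * (r ^ (n + m) * ((((n + m).factorial : ℝ))⁻¹ * C ^ n)) := by
        refine le_mul_of_one_le_left (by positivity) ?_
        have : (0:ℝ) ≤ ((n + m : ℕ) : ℝ) := Nat.cast_nonneg _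
        linarith
    _ = ((n + m : ℕ) + 1 : ℝ) * r ^ (n + m) * (((n + m).factorial : ℝ))⁻¹ * C ^ n := by ring

lemma summable_deriv_entry (c : ℕ → ℝ) (C : ℝ) (hC : 1 ≤ C) (hc : ∀ n, |c n| ≤ C ^ n)
    (m : ℕ) (t : ℝ) :
    Summable fun n : ℕ =>
      (((n + m : ℕ) : ℝ) * t ^ (n + m - 1)) * ((((n + m).factorial : ℝ))⁻¹ * c n) := by
  set r : ℝ := |t| + 1 with hrdef
  have hr : 1 ≤ r := le_add_of_nonneg_left (abs_nonneg t)
  have hr0 : (0:ℝ) ≤ r := le_trans zero_le_one hr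
  refine Summable.of_norm_bounded (master_summable C r hC hr m) fun n => ?_
  rw [Real.norm_eq_abs, abs_mul, abs_mul, abs_mul, abs_pow, Nat.abs_cast,
    abs_of_nonneg (inv_nonneg.mpr (Nat.cast_nonneg ((n+m).factorial) : (0:ℝ) ≤ _))]
  calc ((n + m : ℕ) : ℝ) * |t| ^ (n + m - 1) * ((((n + m).factorial : ℝ))⁻¹ * |c n|)
      ≤ ((n + m : ℕ) : ℝ) * r ^ (n + m - 1) * ((((n + m).factorial : ℝ))⁻¹ * C ^ n) := by
        gcongr
        · simp [hrdef]
        · exact hc n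
    _ ≤ (((n + m : ℕ) : ℝ) + 1) * r ^ (n + m) * ((((n + m).factorial : ℝ))⁻¹ * C ^ n) := by
        gcongr <;> first
          | linarith
          | exact Nat.sub_le _ _
    _ = ((n + m : ℕ) + 1 : ℝ) * r ^ (n + m) * (((n + m).factorial : ℝ))⁻¹ * C ^ n := by ring

lemma core_hasDerivAt (c : ℕ → ℝ) (C : ℝ) (hC : 1 ≤ C) (hc : ∀ n, |c n| ≤ C ^ n)
    (m : ℕ) (t : ℝ) :
    HasDerivAt (fun s : ℝ => ∑' n : ℕ, s ^ (n + m) * ((((n + m).factorial : ℝ))⁻¹ * c n))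
      (∑' n : ℕ, (((n + m : ℕ) : ℝ) * t ^ (n + m - 1)) * ((((n + m).factorial : ℝ))⁻¹ * c n)) t := by
  set r : ℝ := |t| + 1 with hrdef
  have hr : 1 ≤ r := le_add_of_nonneg_left (abs_nonneg t)
  have hr0 : (0:ℝ) ≤ r := le_trans zero_le_one hr
  have hmem : t ∈ Metric.ball (0 : ℝ) r := by
    simp [Real.dist_eq, hrdef]
  have hfa : ∀ n : ℕ, |(((n + m).factorial : ℝ))⁻¹| = (((n + m).factorial : ℝ))⁻¹ :=
    fun n => abs_of_nonneg (inv_nonneg.mpr (Nat.cast_nonneg _))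
  refine hasDerivAt_tsum_of_isPreconnected
    (u := fun n => ((n + m : ℕ) + 1 : ℝ) * r ^ (n + m) * (((n + m).factorial : ℝ))⁻¹ * C ^ n)
    (master_summable C r hC hr m) Metric.isOpen_ball
    (convex_ball (0:ℝ) r).isPreconnected
    (fun n y _ => (hasDerivAt_pow (n + m) y).mul_const _)
    (fun n y hy => ?_) hmem ?_ hmem
  · have hyr : |y| ≤ r := le_of_lt (by simpa [Real.norm_eq_abs] using mem_ball_zero_iff.mp hy)
    rw [Real.norm_eq_abs, abs_mul, abs_mul, abs_mul, abs_pow, hfa, Nat.abs_cast]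
    calc ((n + m : ℕ) : ℝ) * |y| ^ (n + m - 1) * ((((n + m).factorial : ℝ))⁻¹ * |c n|)
        ≤ ((n + m : ℕ) : ℝ) * r ^ (n + m - 1) * ((((n + m).factorial : ℝ))⁻¹ * C ^ n) := by
          gcongr
          exact hc n
      _ ≤ (((n + m : ℕ) : ℝ) + 1) * r ^ (n + m) * ((((n + m).factorial : ℝ))⁻¹ * C ^ n) := by
          gcongr <;> first
            | linarith
            | exact Nat.sub_le _ _
      _ = ((n + m : ℕ) + 1 : ℝ) * r ^ (n + m) * (((n + m).factorial : ℝ))⁻¹ * C ^ n := by ring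
  · refine Summable.of_norm_bounded (master_summable C r hC hr m) fun n => ?_
    have hyr : |t| ≤ r := by simp [hrdef]
    rw [Real.norm_eq_abs, abs_mul, abs_mul, abs_pow, hfa]
    calc |t| ^ (n + m) * ((((n + m).factorial : ℝ))⁻¹ * |c n|)
        ≤ r ^ (n + m) * ((((n + m).factorial : ℝ))⁻¹ * C ^ n) := by
          gcongr
          exact hc n
      _ ≤ (((n + m : ℕ) : ℝ) + 1) * (r ^ (n + m) * ((((n + m).factorial : ℝ))⁻¹ * C ^ n)) := by
          refine le_mul_of_one_le_left (by positivity) ?_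
          have : (0:ℝ) ≤ ((n + m : ℕ) : ℝ) := Nat.cast_nonneg _
          linarith
      _ = ((n + m : ℕ) + 1 : ℝ) * r ^ (n + m) * (((n + m).factorial : ℝ))⁻¹ * C ^ n := by ring

lemma gamma_entry (ω : Fin 3 → ℝ) (C : ℝ) (hC : 1 ≤ C)
    (hc : ∀ (n : ℕ) (i j : Fin 3), |(skew ω ^ n) i j| ≤ C ^ n)
    (m : ℕ) (s : ℝ) (i j : Fin 3) :
    Gamma m (s • ω) i j = ∑' n : ℕ, s ^ n * ((((n + m).factorial : ℝ))⁻¹ * (skew ω ^ n) i j) := by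
  have hsummable : Summable fun n : ℕ =>
      (((n + m).factorial : ℝ))⁻¹ • (skew (s • ω)) ^ n := by
    refine Pi.summable.mpr ?_
    intro i'
    rw [Pi.summable]
    intro j'
    have : (fun n : ℕ => ((((n + m).factorial : ℝ))⁻¹ • (skew (s • ω)) ^ n) i' j')
        = fun n : ℕ => s ^ n * ((((n + m).factorial : ℝ))⁻¹ * (skew ω ^ n) i' j') := by
      funext n
      rw [skew_smul, smul_pow]
      simp [Matrix.smul_apply, smul_eq_mul]
      ring
    rw [this]
    exact summable_entry _ C hC (fun n => hc n i' j') m s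
  have h1 : Gamma m (s • ω) i j
      = ∑' n : ℕ, ((((n + m).factorial : ℝ))⁻¹ • (skew (s • ω)) ^ n) i j := by
    rw [Gamma]
    exact (congrFun (tsum_apply hsummable) j).trans (tsum_apply ((Pi.summable.mp hsummable) i))
  rw [h1]
  refine tsum_congr fun n => ?_
  rw [skew_smul, smul_pow]
  simp [Matrix.smul_apply, smul_eq_mul]
  ring

lemma fact_ratio (n : ℕ) :
    (((n + 1 : ℕ)) : ℝ) * (((n + 1).factorial : ℝ))⁻¹ = ((n.factorial : ℝ))⁻¹ := by
  rw [Nat.factorial_succ]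
  push_cast
  rw [mul_inv, ← mul_assoc, mul_inv_cancel₀ (by positivity), one_mul]

end Aux

section Deriv

variable (ω : Fin 3 → ℝ) (C : ℝ) (hC : 1 ≤ C)
  (hc : ∀ (n : ℕ) (i j : Fin 3), |(skew ω ^ n) i j| ≤ C ^ n)

include hC hc in
lemma gammaDeriv0 (t : ℝ) (i j : Fin 3) :
    HasDerivAt (fun s : ℝ => Gamma 0 (s • ω) i j)
      ((Gamma 0 (t • ω) * skew ω) i j) t := by
  set A := skew ω with hA
  have hcore := core_hasDerivAt (fun n => (A ^ n) i j) C hC (fun n => hc n i j) 0 t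
  simp only [Nat.add_zero] at hcore
  have hfun : (fun s : ℝ => ∑' n : ℕ, s ^ n * ((n.factorial : ℝ)⁻¹ * (A ^ n) i j))
      = fun s : ℝ => Gamma 0 (s • ω) i j := by
    funext s
    rw [gamma_entry ω C hC hc 0 s i j]
    simp only [Nat.add_zero]
    rfl
  rw [← hfun]
  convert hcore using 1
  -- ∑ shift
  have hshift : (∑' n : ℕ, ((n : ℝ) * t ^ (n - 1)) * ((n.factorial : ℝ)⁻¹ * (A ^ n) i j))
      = ∑' n : ℕ, t ^ n * ((n.factorial : ℝ)⁻¹ * (A ^ (n + 1)) i j) := by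
    have hs : Summable fun n : ℕ =>
        ((n : ℝ) * t ^ (n - 1)) * ((n.factorial : ℝ)⁻¹ * (A ^ n) i j) := by
      have := summable_deriv_entry (fun n => (A ^ n) i j) C hC (fun n => hc n i j) 0 t
      simpa only [Nat.add_zero] using this
    rw [Summable.tsum_eq_zero_add hs]
    simp only [Nat.cast_zero, zero_mul, Nat.cast_ofNat, zero_add]
    refine tsum_congr fun n => ?_
    have h1 : ((n + 1 : ℕ) : ℝ) * t ^ (n + 1 - 1) * ((((n + 1).factorial : ℝ))⁻¹ * (A ^ (n + 1)) i j)
        = t ^ n * ((((n + 1 : ℕ)) : ℝ) * (((n + 1).factorial : ℝ))⁻¹ * (A ^ (n + 1)) i j) := by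
      simp only [Nat.add_sub_cancel]
      ring
    rw [h1, fact_ratio]
  rw [hshift]
  rw [Matrix.mul_apply]
  have h2 : ∀ k : Fin 3, Gamma 0 (t • ω) i k * A k j
      = ∑' n : ℕ, (t ^ n * ((n.factorial : ℝ)⁻¹ * (A ^ n) i k)) * A k j := by
    intro k
    rw [gamma_entry ω C hC hc 0 t i k]
    simp only [Nat.add_zero]
    rw [tsum_mul_right]
  simp only [h2]
  rw [← Summable.tsum_finsetSum (fun k _ => Summable.mul_right _
    (by simpa only [Nat.add_zero] using
      summable_entry (fun n => (A ^ n) i k) C hC (fun n => hc n i k) 0 t))]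
  refine tsum_congr fun n => ?_
  calc ∑ k : Fin 3, (t ^ n * ((n.factorial : ℝ)⁻¹ * (A ^ n) i k)) * A k j
      = t ^ n * ((n.factorial : ℝ)⁻¹ * ∑ k : Fin 3, (A ^ n) i k * A k j) := by
        rw [Finset.mul_sum, Finset.mul_sum]
        exact Finset.sum_congr rfl fun k _ => by ring
    _ = t ^ n * ((n.factorial : ℝ)⁻¹ * (A ^ (n + 1)) i j) := by
        rw [← Matrix.mul_apply, ← pow_succ]

include hC hc in
lemma gammaDeriv1 (t : ℝ) (i j : Fin 3) :
    HasDerivAt (fun s : ℝ => s * Gamma 1 (s • ω) i j) (Gamma 0 (t • ω) i j) t := by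
  set A := skew ω with hA
  have hcore := core_hasDerivAt (fun n => (A ^ n) i j) C hC (fun n => hc n i j) 1 t
  have hfun : (fun s : ℝ => ∑' n : ℕ, s ^ (n + 1) * ((((n + 1).factorial : ℝ))⁻¹ * (A ^ n) i j))
      = fun s : ℝ => s * Gamma 1 (s • ω) i j := by
    funext s
    rw [gamma_entry ω C hC hc 1 s i j, ← tsum_mul_left]
    refine tsum_congr fun n => ?_
    rw [pow_succ]
    ring
  rw [← hfun]
  convert hcore using 1
  rw [gamma_entry ω C hC hc 0 t i j]
  refine tsum_congr fun n => ?_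
  simp only [Nat.add_zero, Nat.add_sub_cancel]
  rw [← fact_ratio n]
  ring

include hC hc in
lemma gammaDeriv2 (t : ℝ) (i j : Fin 3) :
    HasDerivAt (fun s : ℝ => s ^ 2 * Gamma 2 (s • ω) i j) (t * Gamma 1 (t • ω) i j) t := by
  set A := skew ω with hA
  have hcore := core_hasDerivAt (fun n => (A ^ n) i j) C hC (fun n => hc n i j) 2 t
  have hfun : (fun s : ℝ => ∑' n : ℕ, s ^ (n + 2) * ((((n + 2).factorial : ℝ))⁻¹ * (A ^ n) i j))
      = fun s : ℝ => s ^ 2 * Gamma 2 (s • ω) i j := by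
    funext s
    rw [gamma_entry ω C hC hc 2 s i j, ← tsum_mul_left]
    refine tsum_congr fun n => ?_
    rw [pow_add]
    ring
  rw [← hfun]
  convert hcore using 1
  rw [gamma_entry ω C hC hc 1 t i j, ← tsum_mul_left]
  refine tsum_congr fun n => ?_
  have h1 : ((n + 2 : ℕ) : ℝ) * (((n + 2).factorial : ℝ))⁻¹ = (((n + 1).factorial : ℝ))⁻¹ := by
    have := fact_ratio (n + 1)
    push_cast at this ⊢
    linarith
  have h2 : (((n + 2 : ℕ)) : ℝ) * t ^ (n + 2 - 1) * ((((n + 2).factorial : ℝ))⁻¹ * (A ^ n) i j)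
      = t ^ (n + 1) * (((n + 2 : ℕ) : ℝ) * (((n + 2).factorial : ℝ))⁻¹ * (A ^ n) i j) := by
    have e : n + 2 - 1 = n + 1 := rfl
    rw [e]
    ring
  rw [h2, h1]
  rw [pow_succ]
  ring

end Deriv

/-- **Exact discretization of the strapdown IMU dynamics under zero-order hold.**
With constant inputs `ω`, `a` and gravity `g`, the curves
`R(t) = R₀ Γ₀(tω)`, `v(t) = v₀ + t g + t R₀ Γ₁(tω) a`,
`p(t) = p₀ + t v₀ + (t²/2) g + t² R₀ Γ₂(tω) a`
are differentiable and satisfy `Ṙ = R ω̂`, `v̇ = R a + g`, `ṗ = v`; hence the discrete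
strapdown updates are an exact integration of the continuous system. -/
theorem strapdown_discretization_exact
    (ω a g : Fin 3 → ℝ) (R₀ : Matrix (Fin 3) (Fin 3) ℝ) (v₀ p₀ : Fin 3 → ℝ)
    (R : ℝ → Matrix (Fin 3) (Fin 3) ℝ) (hRdef : R = fun t => R₀ * Gamma 0 (t • ω))
    (v : ℝ → Fin 3 → ℝ)
    (hvdef : v = fun t => v₀ + t • g + t • (R₀ *ᵥ (Gamma 1 (t • ω) *ᵥ a)))
    (p : ℝ → Fin 3 → ℝ)
    (hpdef : p = fun t =>
      p₀ + t • v₀ + (t ^ 2 / 2) • g + (t ^ 2) • (R₀ *ᵥ (Gamma 2 (t • ω) *ᵥ a))) :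
    (∀ (t : ℝ) (i j : Fin 3),
        HasDerivAt (fun s => R s i j) ((R t * skew ω) i j) t) ∧
    (∀ (t : ℝ) (i : Fin 3),
        HasDerivAt (fun s => v s i) ((R t *ᵥ a + g) i) t) ∧
    (∀ (t : ℝ) (i : Fin 3),
        HasDerivAt (fun s => p s i) (v t i) t) := by
  obtain ⟨C, hC, hc⟩ := entry_bound (skew ω)
  refine ⟨?_, ?_, ?_⟩
  · -- rotation
    intro t i j
    simp only [hRdef]
    have hfun : (fun s : ℝ => (R₀ * Gamma 0 (s • ω)) i j)
        = fun s : ℝ => ∑ k : Fin 3, R₀ i k * Gamma 0 (s • ω) k j := by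
      funext s
      rw [Matrix.mul_apply]
    rw [hfun]
    have hd := HasDerivAt.fun_sum
      (fun k (_ : k ∈ Finset.univ) =>
        HasDerivAt.const_mul (R₀ i k) (gammaDeriv0 ω C hC hc t k j))
    refine hd.congr_deriv ?_
    rw [Matrix.mul_assoc, Matrix.mul_apply]
  · -- velocity
    intro t i
    simp only [hvdef, hRdef]
    have hfun : (fun s : ℝ => (v₀ + s • g + s • (R₀ *ᵥ (Gamma 1 (s • ω) *ᵥ a))) i)
        = fun s : ℝ => v₀ i + s * g i
            + ∑ k : Fin 3, R₀ i k * ∑ l : Fin 3, (s * Gamma 1 (s • ω) k l) * a l := by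
      funext s
      simp only [Pi.add_apply, Pi.smul_apply, smul_eq_mul, Matrix.mulVec, dotProduct]
      congr 1
      rw [Finset.mul_sum]
      refine Finset.sum_congr rfl fun k _ => ?_
      rw [Finset.mul_sum, Finset.mul_sum, Finset.mul_sum]
      exact Finset.sum_congr rfl fun l _ => by ring
    rw [hfun]
    have hd1 := (hasDerivAt_const t (v₀ i)).add ((hasDerivAt_id t).mul_const (g i))
    have hd2 := HasDerivAt.fun_sum (fun k (_ : k ∈ Finset.univ) =>
        HasDerivAt.const_mul (R₀ i k)
          (HasDerivAt.fun_sum (fun l (_ : l ∈ Finset.univ) =>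
            (gammaDeriv1 ω C hC hc t k l).mul_const (a l))))
    have hd := hd1.add hd2
    refine hd.congr_deriv ?_
    simp only [Pi.add_apply, ← Matrix.mulVec_mulVec, Matrix.mulVec, dotProduct]
    ring
  · -- position
    intro t i
    simp only [hpdef, hvdef]
    have hfun : (fun s : ℝ =>
          (p₀ + s • v₀ + (s ^ 2 / 2) • g + (s ^ 2) • (R₀ *ᵥ (Gamma 2 (s • ω) *ᵥ a))) i)
        = fun s : ℝ => p₀ i + s * v₀ i + s ^ 2 * (g i / 2)
            + ∑ k : Fin 3, R₀ i k * ∑ l : Fin 3, (s ^ 2 * Gamma 2 (s • ω) k l) * a l := by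
      funext s
      simp only [Pi.add_apply, Pi.smul_apply, smul_eq_mul, Matrix.mulVec, dotProduct]
      congr 1
      · congr 1
        ring
      rw [Finset.mul_sum]
      refine Finset.sum_congr rfl fun k _ => ?_
      rw [Finset.mul_sum, Finset.mul_sum, Finset.mul_sum]
      exact Finset.sum_congr rfl fun l _ => by ring
    rw [hfun]
    have hd1 := ((hasDerivAt_const t (p₀ i)).add
        ((hasDerivAt_id t).mul_const (v₀ i))).add
        ((hasDerivAt_pow 2 t).mul_const (g i / 2))
    have hd2 := HasDerivAt.fun_sum (fun k (_ : k ∈ Finset.univ) =>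
        HasDerivAt.const_mul (R₀ i k)
          (HasDerivAt.fun_sum (fun l (_ : l ∈ Finset.univ) =>
            (gammaDeriv2 ω C hC hc t k l).mul_const (a l))))
    have hd := hd1.add hd2
    refine hd.congr_deriv ?_
    have hsum : ∀ k : Fin 3, (∑ l : Fin 3, (t * Gamma 1 (t • ω) k l) * a l)
        = t * ∑ l : Fin 3, Gamma 1 (t • ω) k l * a l := by
      intro k
      rw [Finset.mul_sum]
      exact Finset.sum_congr rfl fun l _ => by ring
    simp only [Pi.add_apply, Pi.smul_apply, smul_eq_mul, Matrix.mulVec, dotProduct, hsum]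
    rw [Finset.mul_sum]
    have : ∀ k : Fin 3, t * (R₀ i k * ∑ l : Fin 3, Gamma 1 (t • ω) k l * a l)
        = R₀ i k * (t * ∑ l : Fin 3, Gamma 1 (t • ω) k l * a l) := fun k => by ring
    simp only [this]
    ring
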